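/- For every nonnegative integer l and every prime p ≠ 3, the rational number (1/9)_{5l}·(2/3)_{3l}·(4/9)_{2l} / ((1)_{9l}·(2/9)_l) is p-integral, where (a)_k = a(a+1)⋯(a+k−1) denotes the Pochhammer symbol (with (a)₀ = 1). -/

import Mathlib

lemma getm {d x k : ℕ} (hdvd : d ∣ x) (hlb : 0 < x) (hub : x < k*d) :
    ∃ m, 1 ≤ m ∧ m < k ∧ x = m*d := by
  obtain ⟨m, rfl⟩ := hdvd
  rw [Nat.mul_comm] at hub
  refine ⟨m, ?_, ?_, by ring⟩
  · rcases Nat.eq_zero_or_pos m with rfl | h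
    · simp at hlb
    · exact h
  · by_contra h
    push_neg at h
    have : k * d ≤ m * d := Nat.mul_le_mul_right d h
    omega

set_option maxHeartbeats 4000000 in
lemma coreT1 (d x1 x2 x3 x4 x5 s1 s2 s3 s4 s5 : ℕ)
    (hdm : d % 9 = 1)
    (hs1 : s1 < d) (hs2 : s2 < d) (hs3 : s3 < d) (hs4 : s4 < d) (hs5 : s5 < d)
    (hx4 : x4 < 9) (hx1 : x1 < 6) (hx2 : x2 < 4) (hx3 : x3 < 3) (hx5 : x5 < 2)
    (E1 : 9*(d*x1) + 9*s1 + 8 = 5*(d*x4) + 8*d + 5*s4)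
    (E2 : 3*(d*x2) + 3*s2 + 1 = (d*x4) + 1*d + s4)
    (E3 : 9*(d*x3) + 9*s3 + 5 = 2*(d*x4) + 5*d + 2*s4)
    (E5 : 9*(d*x5) + 9*s5 + 7 = (d*x4) + 7*d + s4) :
    x4 + x5 ≤ x1 + x2 + x3 := by
  interval_cases x4 <;> interval_cases x1 <;> (try omega) <;>
    interval_cases x2 <;> (try omega) <;> interval_cases x3 <;> (try omega) <;>
    interval_cases x5 <;> omega

set_option maxHeartbeats 4000000 in
lemma coreD1 (d a b c e r : ℕ) (hd : 0 < d) (ha : a < d) (hb : b < d) (hc : c < d)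
    (he : e < d) (hr : r < d)
    (h1 : 9*a+1 = 1*d) (h2 : 3*b+2 = 2*d) (h3 : 9*c+4 = 4*d) (h4 : 9*e+2 = 2*d) :
    9*r/d + (r+(d-1-e))/d ≤ (5*r+(d-1-a))/d + (3*r+(d-1-b))/d + (2*r+(d-1-c))/d := by
  have D1 := Nat.div_add_mod (9*r) d
  have D1' : 9*r % d < d := Nat.mod_lt _ hd
  have B1 : 9*r/d < 9 := Nat.div_lt_of_lt_mul (by omega)
  have D2 := Nat.div_add_mod (r+(d-1-e)) d
  have D2' : (r+(d-1-e)) % d < d := Nat.mod_lt _ hd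
  have B2 : (r+(d-1-e))/d < 2 := Nat.div_lt_of_lt_mul (by omega)
  have D3 := Nat.div_add_mod (5*r+(d-1-a)) d
  have D3' : (5*r+(d-1-a)) % d < d := Nat.mod_lt _ hd
  have B3 : (5*r+(d-1-a))/d < 6 := Nat.div_lt_of_lt_mul (by omega)
  have D4 := Nat.div_add_mod (3*r+(d-1-b)) d
  have D4' : (3*r+(d-1-b)) % d < d := Nat.mod_lt _ hd
  have B4 : (3*r+(d-1-b))/d < 4 := Nat.div_lt_of_lt_mul (by omega)
  have D5 := Nat.div_add_mod (2*r+(d-1-c)) d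
  have D5' : (2*r+(d-1-c)) % d < d := Nat.mod_lt _ hd
  have B5 : (2*r+(d-1-c))/d < 3 := Nat.div_lt_of_lt_mul (by omega)
  set x4 := 9*r/d
  set x5 := (r+(d-1-e))/d
  set x1 := (5*r+(d-1-a))/d
  set x2 := (3*r+(d-1-b))/d
  set x3 := (2*r+(d-1-c))/d
  set s4 := 9*r % d
  set s5 := (r+(d-1-e)) % d
  set s1 := (5*r+(d-1-a)) % d
  set s2 := (3*r+(d-1-b)) % d
  set s3 := (2*r+(d-1-c)) % d
  clear_value x1 x2 x3 x4 x5 s1 s2 s3 s4 s5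
  exact coreT1 d x1 x2 x3 x4 x5 s1 s2 s3 s4 s5 (by omega) D3' D4' D5' D1' D2' B1 B3 B4 B5 B2
    (by omega) (by omega) (by omega) (by omega)

set_option maxHeartbeats 4000000 in
lemma coreT2 (d x1 x2 x3 x4 x5 s1 s2 s3 s4 s5 : ℕ)
    (hdm : d % 9 = 2)
    (hs1 : s1 < d) (hs2 : s2 < d) (hs3 : s3 < d) (hs4 : s4 < d) (hs5 : s5 < d)
    (hx4 : x4 < 9) (hx1 : x1 < 6) (hx2 : x2 < 4) (hx3 : x3 < 3) (hx5 : x5 < 2)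
    (E1 : 9*(d*x1) + 9*s1 + 8 = 5*(d*x4) + 4*d + 5*s4)
    (E2 : 3*(d*x2) + 3*s2 + 1 = (d*x4) + 2*d + s4)
    (E3 : 9*(d*x3) + 9*s3 + 5 = 2*(d*x4) + 7*d + 2*s4)
    (E5 : 9*(d*x5) + 9*s5 + 7 = (d*x4) + 8*d + s4) :
    x4 + x5 ≤ x1 + x2 + x3 := by
  interval_cases x4 <;> interval_cases x1 <;> (try omega) <;>
    interval_cases x2 <;> (try omega) <;> interval_cases x3 <;> (try omega) <;>
    interval_cases x5 <;> omega

set_option maxHeartbeats 4000000 in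
lemma coreD2 (d a b c e r : ℕ) (hd : 0 < d) (ha : a < d) (hb : b < d) (hc : c < d)
    (he : e < d) (hr : r < d)
    (h1 : 9*a+1 = 5*d) (h2 : 3*b+2 = 1*d) (h3 : 9*c+4 = 2*d) (h4 : 9*e+2 = 1*d) :
    9*r/d + (r+(d-1-e))/d ≤ (5*r+(d-1-a))/d + (3*r+(d-1-b))/d + (2*r+(d-1-c))/d := by
  have D1 := Nat.div_add_mod (9*r) d
  have D1' : 9*r % d < d := Nat.mod_lt _ hd
  have B1 : 9*r/d < 9 := Nat.div_lt_of_lt_mul (by omega)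
  have D2 := Nat.div_add_mod (r+(d-1-e)) d
  have D2' : (r+(d-1-e)) % d < d := Nat.mod_lt _ hd
  have B2 : (r+(d-1-e))/d < 2 := Nat.div_lt_of_lt_mul (by omega)
  have D3 := Nat.div_add_mod (5*r+(d-1-a)) d
  have D3' : (5*r+(d-1-a)) % d < d := Nat.mod_lt _ hd
  have B3 : (5*r+(d-1-a))/d < 6 := Nat.div_lt_of_lt_mul (by omega)
  have D4 := Nat.div_add_mod (3*r+(d-1-b)) d
  have D4' : (3*r+(d-1-b)) % d < d := Nat.mod_lt _ hd
  have B4 : (3*r+(d-1-b))/d < 4 := Nat.div_lt_of_lt_mul (by omega)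
  have D5 := Nat.div_add_mod (2*r+(d-1-c)) d
  have D5' : (2*r+(d-1-c)) % d < d := Nat.mod_lt _ hd
  have B5 : (2*r+(d-1-c))/d < 3 := Nat.div_lt_of_lt_mul (by omega)
  set x4 := 9*r/d
  set x5 := (r+(d-1-e))/d
  set x1 := (5*r+(d-1-a))/d
  set x2 := (3*r+(d-1-b))/d
  set x3 := (2*r+(d-1-c))/d
  set s4 := 9*r % d
  set s5 := (r+(d-1-e)) % d
  set s1 := (5*r+(d-1-a)) % d
  set s2 := (3*r+(d-1-b)) % d
  set s3 := (2*r+(d-1-c)) % d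
  clear_value x1 x2 x3 x4 x5 s1 s2 s3 s4 s5
  exact coreT2 d x1 x2 x3 x4 x5 s1 s2 s3 s4 s5 (by omega) D3' D4' D5' D1' D2' B1 B3 B4 B5 B2
    (by omega) (by omega) (by omega) (by omega)

set_option maxHeartbeats 4000000 in
lemma coreT4 (d x1 x2 x3 x4 x5 s1 s2 s3 s4 s5 : ℕ)
    (hdm : d % 9 = 4)
    (hs1 : s1 < d) (hs2 : s2 < d) (hs3 : s3 < d) (hs4 : s4 < d) (hs5 : s5 < d)
    (hx4 : x4 < 9) (hx1 : x1 < 6) (hx2 : x2 < 4) (hx3 : x3 < 3) (hx5 : x5 < 2)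
    (E1 : 9*(d*x1) + 9*s1 + 8 = 5*(d*x4) + 2*d + 5*s4)
    (E2 : 3*(d*x2) + 3*s2 + 1 = (d*x4) + 1*d + s4)
    (E3 : 9*(d*x3) + 9*s3 + 5 = 2*(d*x4) + 8*d + 2*s4)
    (E5 : 9*(d*x5) + 9*s5 + 7 = (d*x4) + 4*d + s4) :
    x4 + x5 ≤ x1 + x2 + x3 := by
  interval_cases x4 <;> interval_cases x1 <;> (try omega) <;>
    interval_cases x2 <;> (try omega) <;> interval_cases x3 <;> (try omega) <;>
    interval_cases x5 <;> omega

set_option maxHeartbeats 4000000 in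
lemma coreD4 (d a b c e r : ℕ) (hd : 0 < d) (ha : a < d) (hb : b < d) (hc : c < d)
    (he : e < d) (hr : r < d)
    (h1 : 9*a+1 = 7*d) (h2 : 3*b+2 = 2*d) (h3 : 9*c+4 = 1*d) (h4 : 9*e+2 = 5*d) :
    9*r/d + (r+(d-1-e))/d ≤ (5*r+(d-1-a))/d + (3*r+(d-1-b))/d + (2*r+(d-1-c))/d := by
  have D1 := Nat.div_add_mod (9*r) d
  have D1' : 9*r % d < d := Nat.mod_lt _ hd
  have B1 : 9*r/d < 9 := Nat.div_lt_of_lt_mul (by omega)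
  have D2 := Nat.div_add_mod (r+(d-1-e)) d
  have D2' : (r+(d-1-e)) % d < d := Nat.mod_lt _ hd
  have B2 : (r+(d-1-e))/d < 2 := Nat.div_lt_of_lt_mul (by omega)
  have D3 := Nat.div_add_mod (5*r+(d-1-a)) d
  have D3' : (5*r+(d-1-a)) % d < d := Nat.mod_lt _ hd
  have B3 : (5*r+(d-1-a))/d < 6 := Nat.div_lt_of_lt_mul (by omega)
  have D4 := Nat.div_add_mod (3*r+(d-1-b)) d
  have D4' : (3*r+(d-1-b)) % d < d := Nat.mod_lt _ hd
  have B4 : (3*r+(d-1-b))/d < 4 := Nat.div_lt_of_lt_mul (by omega)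
  have D5 := Nat.div_add_mod (2*r+(d-1-c)) d
  have D5' : (2*r+(d-1-c)) % d < d := Nat.mod_lt _ hd
  have B5 : (2*r+(d-1-c))/d < 3 := Nat.div_lt_of_lt_mul (by omega)
  set x4 := 9*r/d
  set x5 := (r+(d-1-e))/d
  set x1 := (5*r+(d-1-a))/d
  set x2 := (3*r+(d-1-b))/d
  set x3 := (2*r+(d-1-c))/d
  set s4 := 9*r % d
  set s5 := (r+(d-1-e)) % d
  set s1 := (5*r+(d-1-a)) % d
  set s2 := (3*r+(d-1-b)) % d
  set s3 := (2*r+(d-1-c)) % d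
  clear_value x1 x2 x3 x4 x5 s1 s2 s3 s4 s5
  exact coreT4 d x1 x2 x3 x4 x5 s1 s2 s3 s4 s5 (by omega) D3' D4' D5' D1' D2' B1 B3 B4 B5 B2
    (by omega) (by omega) (by omega) (by omega)

set_option maxHeartbeats 4000000 in
lemma coreT5 (d x1 x2 x3 x4 x5 s1 s2 s3 s4 s5 : ℕ)
    (hdm : d % 9 = 5)
    (hs1 : s1 < d) (hs2 : s2 < d) (hs3 : s3 < d) (hs4 : s4 < d) (hs5 : s5 < d)
    (hx4 : x4 < 9) (hx1 : x1 < 6) (hx2 : x2 < 4) (hx3 : x3 < 3) (hx5 : x5 < 2)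
    (E1 : 9*(d*x1) + 9*s1 + 8 = 5*(d*x4) + 7*d + 5*s4)
    (E2 : 3*(d*x2) + 3*s2 + 1 = (d*x4) + 2*d + s4)
    (E3 : 9*(d*x3) + 9*s3 + 5 = 2*(d*x4) + 1*d + 2*s4)
    (E5 : 9*(d*x5) + 9*s5 + 7 = (d*x4) + 5*d + s4) :
    x4 + x5 ≤ x1 + x2 + x3 := by
  interval_cases x4 <;> interval_cases x1 <;> (try omega) <;>
    interval_cases x2 <;> (try omega) <;> interval_cases x3 <;> (try omega) <;>
    interval_cases x5 <;> omega

set_option maxHeartbeats 4000000 in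
lemma coreD5 (d a b c e r : ℕ) (hd : 0 < d) (ha : a < d) (hb : b < d) (hc : c < d)
    (he : e < d) (hr : r < d)
    (h1 : 9*a+1 = 2*d) (h2 : 3*b+2 = 1*d) (h3 : 9*c+4 = 8*d) (h4 : 9*e+2 = 4*d) :
    9*r/d + (r+(d-1-e))/d ≤ (5*r+(d-1-a))/d + (3*r+(d-1-b))/d + (2*r+(d-1-c))/d := by
  have D1 := Nat.div_add_mod (9*r) d
  have D1' : 9*r % d < d := Nat.mod_lt _ hd
  have B1 : 9*r/d < 9 := Nat.div_lt_of_lt_mul (by omega)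
  have D2 := Nat.div_add_mod (r+(d-1-e)) d
  have D2' : (r+(d-1-e)) % d < d := Nat.mod_lt _ hd
  have B2 : (r+(d-1-e))/d < 2 := Nat.div_lt_of_lt_mul (by omega)
  have D3 := Nat.div_add_mod (5*r+(d-1-a)) d
  have D3' : (5*r+(d-1-a)) % d < d := Nat.mod_lt _ hd
  have B3 : (5*r+(d-1-a))/d < 6 := Nat.div_lt_of_lt_mul (by omega)
  have D4 := Nat.div_add_mod (3*r+(d-1-b)) d
  have D4' : (3*r+(d-1-b)) % d < d := Nat.mod_lt _ hd
  have B4 : (3*r+(d-1-b))/d < 4 := Nat.div_lt_of_lt_mul (by omega)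
  have D5 := Nat.div_add_mod (2*r+(d-1-c)) d
  have D5' : (2*r+(d-1-c)) % d < d := Nat.mod_lt _ hd
  have B5 : (2*r+(d-1-c))/d < 3 := Nat.div_lt_of_lt_mul (by omega)
  set x4 := 9*r/d
  set x5 := (r+(d-1-e))/d
  set x1 := (5*r+(d-1-a))/d
  set x2 := (3*r+(d-1-b))/d
  set x3 := (2*r+(d-1-c))/d
  set s4 := 9*r % d
  set s5 := (r+(d-1-e)) % d
  set s1 := (5*r+(d-1-a)) % d
  set s2 := (3*r+(d-1-b)) % d
  set s3 := (2*r+(d-1-c)) % d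
  clear_value x1 x2 x3 x4 x5 s1 s2 s3 s4 s5
  exact coreT5 d x1 x2 x3 x4 x5 s1 s2 s3 s4 s5 (by omega) D3' D4' D5' D1' D2' B1 B3 B4 B5 B2
    (by omega) (by omega) (by omega) (by omega)

set_option maxHeartbeats 4000000 in
lemma coreT7 (d x1 x2 x3 x4 x5 s1 s2 s3 s4 s5 : ℕ)
    (hdm : d % 9 = 7)
    (hs1 : s1 < d) (hs2 : s2 < d) (hs3 : s3 < d) (hs4 : s4 < d) (hs5 : s5 < d)
    (hx4 : x4 < 9) (hx1 : x1 < 6) (hx2 : x2 < 4) (hx3 : x3 < 3) (hx5 : x5 < 2)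
    (E1 : 9*(d*x1) + 9*s1 + 8 = 5*(d*x4) + 5*d + 5*s4)
    (E2 : 3*(d*x2) + 3*s2 + 1 = (d*x4) + 1*d + s4)
    (E3 : 9*(d*x3) + 9*s3 + 5 = 2*(d*x4) + 2*d + 2*s4)
    (E5 : 9*(d*x5) + 9*s5 + 7 = (d*x4) + 1*d + s4) :
    x4 + x5 ≤ x1 + x2 + x3 := by
  interval_cases x4 <;> interval_cases x1 <;> (try omega) <;>
    interval_cases x2 <;> (try omega) <;> interval_cases x3 <;> (try omega) <;>
    interval_cases x5 <;> omega

set_option maxHeartbeats 4000000 in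
lemma coreD7 (d a b c e r : ℕ) (hd : 0 < d) (ha : a < d) (hb : b < d) (hc : c < d)
    (he : e < d) (hr : r < d)
    (h1 : 9*a+1 = 4*d) (h2 : 3*b+2 = 2*d) (h3 : 9*c+4 = 7*d) (h4 : 9*e+2 = 8*d) :
    9*r/d + (r+(d-1-e))/d ≤ (5*r+(d-1-a))/d + (3*r+(d-1-b))/d + (2*r+(d-1-c))/d := by
  have D1 := Nat.div_add_mod (9*r) d
  have D1' : 9*r % d < d := Nat.mod_lt _ hd
  have B1 : 9*r/d < 9 := Nat.div_lt_of_lt_mul (by omega)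
  have D2 := Nat.div_add_mod (r+(d-1-e)) d
  have D2' : (r+(d-1-e)) % d < d := Nat.mod_lt _ hd
  have B2 : (r+(d-1-e))/d < 2 := Nat.div_lt_of_lt_mul (by omega)
  have D3 := Nat.div_add_mod (5*r+(d-1-a)) d
  have D3' : (5*r+(d-1-a)) % d < d := Nat.mod_lt _ hd
  have B3 : (5*r+(d-1-a))/d < 6 := Nat.div_lt_of_lt_mul (by omega)
  have D4 := Nat.div_add_mod (3*r+(d-1-b)) d
  have D4' : (3*r+(d-1-b)) % d < d := Nat.mod_lt _ hd
  have B4 : (3*r+(d-1-b))/d < 4 := Nat.div_lt_of_lt_mul (by omega)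
  have D5 := Nat.div_add_mod (2*r+(d-1-c)) d
  have D5' : (2*r+(d-1-c)) % d < d := Nat.mod_lt _ hd
  have B5 : (2*r+(d-1-c))/d < 3 := Nat.div_lt_of_lt_mul (by omega)
  set x4 := 9*r/d
  set x5 := (r+(d-1-e))/d
  set x1 := (5*r+(d-1-a))/d
  set x2 := (3*r+(d-1-b))/d
  set x3 := (2*r+(d-1-c))/d
  set s4 := 9*r % d
  set s5 := (r+(d-1-e)) % d
  set s1 := (5*r+(d-1-a)) % d
  set s2 := (3*r+(d-1-b)) % d
  set s3 := (2*r+(d-1-c)) % d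
  clear_value x1 x2 x3 x4 x5 s1 s2 s3 s4 s5
  exact coreT7 d x1 x2 x3 x4 x5 s1 s2 s3 s4 s5 (by omega) D3' D4' D5' D1' D2' B1 B3 B4 B5 B2
    (by omega) (by omega) (by omega) (by omega)

set_option maxHeartbeats 4000000 in
lemma coreT8 (d x1 x2 x3 x4 x5 s1 s2 s3 s4 s5 : ℕ)
    (hdm : d % 9 = 8)
    (hs1 : s1 < d) (hs2 : s2 < d) (hs3 : s3 < d) (hs4 : s4 < d) (hs5 : s5 < d)
    (hx4 : x4 < 9) (hx1 : x1 < 6) (hx2 : x2 < 4) (hx3 : x3 < 3) (hx5 : x5 < 2)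
    (E1 : 9*(d*x1) + 9*s1 + 8 = 5*(d*x4) + 1*d + 5*s4)
    (E2 : 3*(d*x2) + 3*s2 + 1 = (d*x4) + 2*d + s4)
    (E3 : 9*(d*x3) + 9*s3 + 5 = 2*(d*x4) + 4*d + 2*s4)
    (E5 : 9*(d*x5) + 9*s5 + 7 = (d*x4) + 2*d + s4) :
    x4 + x5 ≤ x1 + x2 + x3 := by
  interval_cases x4 <;> interval_cases x1 <;> (try omega) <;>
    interval_cases x2 <;> (try omega) <;> interval_cases x3 <;> (try omega) <;>
    interval_cases x5 <;> omega

set_option maxHeartbeats 4000000 in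
lemma coreD8 (d a b c e r : ℕ) (hd : 0 < d) (ha : a < d) (hb : b < d) (hc : c < d)
    (he : e < d) (hr : r < d)
    (h1 : 9*a+1 = 8*d) (h2 : 3*b+2 = 1*d) (h3 : 9*c+4 = 5*d) (h4 : 9*e+2 = 7*d) :
    9*r/d + (r+(d-1-e))/d ≤ (5*r+(d-1-a))/d + (3*r+(d-1-b))/d + (2*r+(d-1-c))/d := by
  have D1 := Nat.div_add_mod (9*r) d
  have D1' : 9*r % d < d := Nat.mod_lt _ hd
  have B1 : 9*r/d < 9 := Nat.div_lt_of_lt_mul (by omega)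
  have D2 := Nat.div_add_mod (r+(d-1-e)) d
  have D2' : (r+(d-1-e)) % d < d := Nat.mod_lt _ hd
  have B2 : (r+(d-1-e))/d < 2 := Nat.div_lt_of_lt_mul (by omega)
  have D3 := Nat.div_add_mod (5*r+(d-1-a)) d
  have D3' : (5*r+(d-1-a)) % d < d := Nat.mod_lt _ hd
  have B3 : (5*r+(d-1-a))/d < 6 := Nat.div_lt_of_lt_mul (by omega)
  have D4 := Nat.div_add_mod (3*r+(d-1-b)) d
  have D4' : (3*r+(d-1-b)) % d < d := Nat.mod_lt _ hd
  have B4 : (3*r+(d-1-b))/d < 4 := Nat.div_lt_of_lt_mul (by omega)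
  have D5 := Nat.div_add_mod (2*r+(d-1-c)) d
  have D5' : (2*r+(d-1-c)) % d < d := Nat.mod_lt _ hd
  have B5 : (2*r+(d-1-c))/d < 3 := Nat.div_lt_of_lt_mul (by omega)
  set x4 := 9*r/d
  set x5 := (r+(d-1-e))/d
  set x1 := (5*r+(d-1-a))/d
  set x2 := (3*r+(d-1-b))/d
  set x3 := (2*r+(d-1-c))/d
  set s4 := 9*r % d
  set s5 := (r+(d-1-e)) % d
  set s1 := (5*r+(d-1-a)) % d
  set s2 := (3*r+(d-1-b)) % d
  set s3 := (2*r+(d-1-c)) % d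
  clear_value x1 x2 x3 x4 x5 s1 s2 s3 s4 s5
  exact coreT8 d x1 x2 x3 x4 x5 s1 s2 s3 s4 s5 (by omega) D3' D4' D5' D1' D2' B1 B3 B4 B5 B2
    (by omega) (by omega) (by omega) (by omega)

set_option maxHeartbeats 4000000 in
lemma core (d a b c e r : ℕ) (hd : 0 < d) (ha : a < d) (hb : b < d) (hc : c < d) (he : e < d)
    (hr : r < d)
    (h1 : d ∣ 9*a+1) (h2 : d ∣ 3*b+2) (h3 : d ∣ 9*c+4) (h4 : d ∣ 9*e+2) :
    9*r/d + (r+(d-1-e))/d ≤ (5*r+(d-1-a))/d + (3*r+(d-1-b))/d + (2*r+(d-1-c))/d := by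
  obtain ⟨m1, hm1a, hm1b, hm1⟩ := getm h1 (by omega) (show 9*a+1 < 9*d by omega)
  obtain ⟨m2, hm2a, hm2b, hm2⟩ := getm h2 (by omega) (show 3*b+2 < 3*d by omega)
  obtain ⟨m3, hm3a, hm3b, hm3⟩ := getm h3 (by omega) (show 9*c+4 < 9*d by omega)
  obtain ⟨m4, hm4a, hm4b, hm4⟩ := getm h4 (by omega) (show 9*e+2 < 9*d by omega)
  interval_cases m1
  · have hb2 : 3*b+2 = 2*d := by interval_cases m2 <;> omega
    have hc2 : 9*c+4 = 4*d := by interval_cases m3 <;> omega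
    have he2 : 9*e+2 = 2*d := by interval_cases m4 <;> omega
    exact coreD1 d a b c e r hd ha hb hc he hr hm1 hb2 hc2 he2
  · have hb2 : 3*b+2 = 1*d := by interval_cases m2 <;> omega
    have hc2 : 9*c+4 = 8*d := by interval_cases m3 <;> omega
    have he2 : 9*e+2 = 4*d := by interval_cases m4 <;> omega
    exact coreD5 d a b c e r hd ha hb hc he hr hm1 hb2 hc2 he2
  · omega
  · have hb2 : 3*b+2 = 2*d := by interval_cases m2 <;> omega
    have hc2 : 9*c+4 = 7*d := by interval_cases m3 <;> omega
    have he2 : 9*e+2 = 8*d := by interval_cases m4 <;> omega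
    exact coreD7 d a b c e r hd ha hb hc he hr hm1 hb2 hc2 he2
  · have hb2 : 3*b+2 = 1*d := by interval_cases m2 <;> omega
    have hc2 : 9*c+4 = 2*d := by interval_cases m3 <;> omega
    have he2 : 9*e+2 = 1*d := by interval_cases m4 <;> omega
    exact coreD2 d a b c e r hd ha hb hc he hr hm1 hb2 hc2 he2
  · omega
  · have hb2 : 3*b+2 = 2*d := by interval_cases m2 <;> omega
    have hc2 : 9*c+4 = 1*d := by interval_cases m3 <;> omega
    have he2 : 9*e+2 = 5*d := by interval_cases m4 <;> omega
    exact coreD4 d a b c e r hd ha hb hc he hr hm1 hb2 hc2 he2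
  · have hb2 : 3*b+2 = 1*d := by interval_cases m2 <;> omega
    have hc2 : 9*c+4 = 5*d := by interval_cases m3 <;> omega
    have he2 : 9*e+2 = 7*d := by interval_cases m4 <;> omega
    exact coreD8 d a b c e r hd ha hb hc he hr hm1 hb2 hc2 he2

open Finset

-- Pochhammer eval as product
lemma poch_eval_prod (n : ℕ) (x : ℚ) :
    (ascPochhammer ℚ n).eval x = ∏ j ∈ Finset.range n, (x + j) := by
  induction n with
  | zero => simp
  | succ n ih => rw [ascPochhammer_succ_eval, ih, Finset.prod_range_succ]

-- valuation of a product
lemma padic_prod (p : ℕ) [Fact p.Prime] (n : ℕ) (f : ℕ → ℚ) (hf : ∀ j, f j ≠ 0) :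
    padicValRat p (∏ j ∈ Finset.range n, f j) = ∑ j ∈ Finset.range n, padicValRat p (f j) := by
  induction n with
  | zero => simp [padicValRat.one]
  | succ n ih =>
      rw [Finset.prod_range_succ, Finset.sum_range_succ, padicValRat.mul
        (Finset.prod_ne_zero_iff.mpr fun i _ => hf i) (hf n), ih]

lemma not_dvd_of_val (p : ℕ) (u : ℕ) (hp : p.Prime) (hp3 : p ≠ 3)
    (hu : u = 1 ∨ u = 3 ∨ u = 9) : ¬ p ∣ u := by
  intro h
  rcases hu with rfl | rfl | rfl
  · exact hp.one_lt.ne' (Nat.eq_one_of_dvd_one h)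
  · exact hp3 ((Nat.prime_dvd_prime_iff_eq hp (by norm_num)).mp h)
  · have := (Nat.Prime.dvd_mul hp).mp (show p ∣ 3 * 3 from h)
    rcases this with h' | h' <;>
      exact hp3 ((Nat.prime_dvd_prime_iff_eq hp (by norm_num)).mp h')

-- valuation of a single factor
lemma val_factor (p : ℕ) [hp : Fact p.Prime] (hp3 : p ≠ 3) (u m j : ℕ)
    (hu : u = 1 ∨ u = 3 ∨ u = 9) (hm : 0 < m) :
    padicValRat p ((m : ℚ)/(u : ℚ) + (j : ℚ)) = padicValNat p (m + u*j) := by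
  have hu0 : (u : ℚ) ≠ 0 := by rcases hu with rfl | rfl | rfl <;> norm_num
  have key : (m : ℚ)/(u : ℚ) + (j : ℚ) = ((m + u*j : ℕ) : ℚ) / ((u : ℕ) : ℚ) := by
    field_simp
    push_cast
    ring
  rw [key, padicValRat.div (by positivity) hu0, padicValRat.of_nat, padicValRat.of_nat,
    padicValNat.eq_zero_of_not_dvd (not_dvd_of_val p u hp.out hp3 hu)]
  simp

-- Pochhammer valuation as a sum
lemma poch_val (p : ℕ) [hp : Fact p.Prime] (hp3 : p ≠ 3) (u m n : ℕ)
    (hu : u = 1 ∨ u = 3 ∨ u = 9) (hm : 0 < m) :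
    padicValRat p ((ascPochhammer ℚ n).eval ((m : ℚ)/(u : ℚ))) =
      ∑ j ∈ Finset.range n, (padicValNat p (m + u*j) : ℤ) := by
  have hu0 : (0:ℚ) < (u : ℚ) := by rcases hu with rfl | rfl | rfl <;> norm_num
  rw [poch_eval_prod, padic_prod p n _ (fun j => by positivity)]
  exact Finset.sum_congr rfl fun j _ => val_factor p hp3 u m j hu hm

-- existence of the residue
lemma exists_res (d u m : ℕ) (hd : 0 < d) (hcop : Nat.Coprime u d) :
    ∃ a, a < d ∧ d ∣ u*a + m := by
  haveI : NeZero d := ⟨hd.ne'⟩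
  have hunit : IsUnit (u : ZMod d) := (ZMod.isUnit_iff_coprime u d).mpr hcop
  obtain ⟨v, hv⟩ := hunit
  refine ⟨((v⁻¹ : (ZMod d)ˣ) * (-(m : ZMod d))).val, ZMod.val_lt _, ?_⟩
  rw [← ZMod.natCast_eq_zero_iff]
  push_cast
  rw [ZMod.natCast_zmod_val, ← hv]
  rw [← mul_assoc, Units.mul_inv, one_mul]
  ring

lemma dvd_iff_mod_eq (d u m a n : ℕ) (hcop : Nat.Coprime u d) (ha : a < d)
    (hres : d ∣ u*a + m) : (d ∣ m + u*n ↔ n % d = a) := by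
  have hamod : a % d = a := Nat.mod_eq_of_lt ha
  constructor
  · intro h
    have e1 : u*n + m ≡ 0 [MOD d] := Nat.modEq_zero_iff_dvd.mpr (by rwa [Nat.add_comm] at h)
    have e2 : u*a + m ≡ 0 [MOD d] := Nat.modEq_zero_iff_dvd.mpr hres
    have e4 : u*n ≡ u*a [MOD d] := Nat.ModEq.add_right_cancel' m (e1.trans e2.symm)
    have e5 : n ≡ a [MOD d] := e4.cancel_left_of_coprime (Nat.coprime_comm.mp hcop)
    rw [Nat.ModEq] at e5
    omega
  · intro h
    have e5 : n ≡ a [MOD d] := by rw [Nat.ModEq, hamod]; exact h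
    have e4 : u*n + m ≡ u*a + m [MOD d] := (e5.mul_left u).add_right m
    have := e4.trans (Nat.modEq_zero_iff_dvd.mpr hres)
    rw [Nat.add_comm m (u*n)]
    exact Nat.modEq_zero_iff_dvd.mp this

-- counting lemma
lemma count_divs (d u m a : ℕ) (hd : 0 < d) (hcop : Nat.Coprime u d) (ha : a < d)
    (hres : d ∣ u*a + m) (n : ℕ) :
    (∑ j ∈ Finset.range n, if d ∣ m + u*j then 1 else 0) = (n + (d-1-a))/d := by
  induction n with
  | zero => simp [Nat.div_eq_of_lt (by omega : d-1-a < d)]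
  | succ n ih =>
      rw [Finset.sum_range_succ, ih]
      have hsd : (n + 1 + (d-1-a))/d = (n + (d-1-a))/d + if d ∣ n + 1 + (d-1-a) then 1 else 0 := by
        rw [show n + 1 + (d-1-a) = n + (d-1-a) + 1 by omega]
        exact Nat.succ_div
      have heq : (d ∣ m + u*n) ↔ (d ∣ n + 1 + (d-1-a)) := by
        rw [show n + 1 + (d-1-a) = n + (d-1-a) + 1 by omega]
        rw [dvd_iff_mod_eq d u m a n hcop ha hres]
        have h2 : n + (d-1-a) + 1 = n + (d - a) := by omega
        rw [h2]
        constructor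
        · intro h
          have : n % d + (d - a) ≡ n + (d-a) [MOD d] := ((Nat.mod_modEq n d).add_right _).symm.symm
          have : n + (d - a) ≡ a + (d - a) [MOD d] := by
            exact Nat.ModEq.add_right _ (by rw [Nat.ModEq, h, Nat.mod_eq_of_lt ha])
          have h3 : a + (d - a) = d := by omega
          rw [h3] at this
          exact Nat.modEq_zero_iff_dvd.mp (this.trans (Nat.modEq_zero_iff_dvd.mpr ⟨1, by omega⟩))
        · intro h
          have e1 : n + (d-a) ≡ 0 [MOD d] := Nat.modEq_zero_iff_dvd.mpr h
          have e2 : a + (d-a) ≡ 0 [MOD d] := Nat.modEq_zero_iff_dvd.mpr ⟨1, by omega⟩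
          have e3 : n ≡ a [MOD d] := Nat.ModEq.add_right_cancel' (d-a) (e1.trans e2.symm)
          rw [Nat.ModEq, Nat.mod_eq_of_lt ha] at e3
          exact e3
      rw [hsd]
      by_cases h : d ∣ m + u*n
      · rw [if_pos h, if_pos (heq.mp h)]
      · rw [if_neg h, if_neg (fun hh => h (heq.mpr hh))]

-- padicValNat as indicator sum
lemma val_eq_sum (p : ℕ) [hp : Fact p.Prime] (n B : ℕ) (hn : 0 < n) (hB : n < p^B) :
    padicValNat p n = ∑ i ∈ Finset.Ico 1 B, if p^i ∣ n then 1 else 0 := by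
  set v := padicValNat p n with hv
  have hvB : v < B := by
    by_contra h
    push_neg at h
    have h1 : p^B ≤ p^v := Nat.pow_le_pow_right hp.out.pos h
    have h2 : p^v ∣ n := pow_padicValNat_dvd
    have := Nat.le_of_dvd hn h2
    omega
  have key : ∀ i, (p^i ∣ n ↔ i ≤ v) := by
    intro i
    rw [padicValNat_dvd_iff_le hn.ne']
  have hfilt : (Finset.Ico 1 B).filter (fun i => i ≤ v) = Finset.Ico 1 (v+1) := by
    ext i
    simp only [Finset.mem_Ico, Finset.mem_filter]
    omega
  calc v = ((Finset.Ico 1 B).filter (fun i => i ≤ v)).card := by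
        rw [hfilt, Nat.card_Ico]
        omega
    _ = ∑ i ∈ Finset.Ico 1 B, if i ≤ v then 1 else 0 := Finset.card_filter _ _
    _ = _ := Finset.sum_congr rfl fun i _ => by simp only [key i]
lemma coreGen (d a b c e l : ℕ) (hd : 0 < d) (ha : a < d) (hb : b < d) (hc : c < d) (he : e < d)
    (h1 : d ∣ 9*a+1) (h2 : d ∣ 3*b+2) (h3 : d ∣ 9*c+4) (h4 : d ∣ 9*e+2) :
    9*l/d + (l+(d-1-e))/d ≤ (5*l+(d-1-a))/d + (3*l+(d-1-b))/d + (2*l+(d-1-c))/d := by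
  obtain ⟨q, r, hr, rfl⟩ : ∃ q r, r < d ∧ l = d*q + r :=
    ⟨l/d, l%d, Nat.mod_lt _ hd, (Nat.div_add_mod l d).symm⟩
  have e9 : 9*(d*q+r) = 9*r + (9*q)*d := by ring
  have e5 : 5*(d*q+r)+(d-1-a) = (5*r+(d-1-a)) + (5*q)*d := by ring
  have e3 : 3*(d*q+r)+(d-1-b) = (3*r+(d-1-b)) + (3*q)*d := by ring
  have e2 : 2*(d*q+r)+(d-1-c) = (2*r+(d-1-c)) + (2*q)*d := by ring
  have e1 : (d*q+r)+(d-1-e) = (r+(d-1-e)) + q*d := by ring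
  rw [e9, e5, e3, e2, e1, Nat.add_mul_div_right _ _ hd, Nat.add_mul_div_right _ _ hd,
    Nat.add_mul_div_right _ _ hd, Nat.add_mul_div_right _ _ hd, Nat.add_mul_div_right _ _ hd]
  have := core d a b c e r hd ha hb hc he hr h1 h2 h3 h4
  omega
lemma master (p : ℕ) [hp : Fact p.Prime] (hp3 : p ≠ 3) (l : ℕ) :
    (∑ j ∈ Finset.range (9*l), padicValNat p (1 + 1*j))
      + ∑ j ∈ Finset.range l, padicValNat p (2 + 9*j) ≤
    (∑ j ∈ Finset.range (5*l), padicValNat p (1 + 9*j))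
      + (∑ j ∈ Finset.range (3*l), padicValNat p (2 + 3*j))
      + ∑ j ∈ Finset.range (2*l), padicValNat p (4 + 9*j) := by
  set B := 46*l + 10 with hB
  have hp2 : 2 ≤ p := hp.out.two_le
  have hbig : ∀ x : ℕ, x ≤ 45*l + 9 → x < p^B := by
    intro x hx
    have h1 : B < 2^B := Nat.lt_two_pow_self
    have h2 : (2:ℕ)^B ≤ p^B := Nat.pow_le_pow_left hp2 B
    omega
  -- rewrite each valuation sum as a double sum and swap
  have swap : ∀ (u m n : ℕ), 0 < m → (∀ j, j < n → m + u*j ≤ 45*l+9) →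
      (∑ j ∈ Finset.range n, padicValNat p (m + u*j)) =
      ∑ i ∈ Finset.Ico 1 B, ∑ j ∈ Finset.range n, (if p^i ∣ m + u*j then 1 else 0) := by
    intro u m n hm hub
    rw [Finset.sum_comm]
    exact Finset.sum_congr rfl fun j hj =>
      val_eq_sum p _ B (by omega) (hbig _ (hub j (Finset.mem_range.mp hj)))
  have hc3 : Nat.Coprime 3 p := (Nat.coprime_primes (by norm_num) hp.out).mpr (by omega)
  have hc9 : Nat.Coprime 9 p := by
    have := Nat.Coprime.mul hc3 hc3
    norm_num at this ⊢
    exact this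
  have hc1 : Nat.Coprime 1 p := Nat.coprime_one_left p
  rw [swap 1 1 (9*l) (by norm_num) (by intro j hj; omega),
      swap 9 2 l (by norm_num) (by intro j hj; omega),
      swap 9 1 (5*l) (by norm_num) (by intro j hj; omega),
      swap 3 2 (3*l) (by norm_num) (by intro j hj; omega),
      swap 9 4 (2*l) (by norm_num) (by intro j hj; omega)]
  rw [← Finset.sum_add_distrib, ← Finset.sum_add_distrib, ← Finset.sum_add_distrib]
  apply Finset.sum_le_sum
  intro i _
  set d := p^i with hd
  have hdpos : 0 < d := Nat.pow_pos hp.out.pos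
  have hcop9 : Nat.Coprime 9 d := hc9.pow_right i
  have hcop3 : Nat.Coprime 3 d := hc3.pow_right i
  have hcop1 : Nat.Coprime 1 d := Nat.coprime_one_left d
  obtain ⟨a, haa, hra⟩ := exists_res d 9 1 hdpos hcop9
  obtain ⟨b, hbb, hrb⟩ := exists_res d 3 2 hdpos hcop3
  obtain ⟨c, hcc, hrc⟩ := exists_res d 9 4 hdpos hcop9
  obtain ⟨e, hee, hre⟩ := exists_res d 9 2 hdpos hcop9
  obtain ⟨a0, ha0, hra0⟩ := exists_res d 1 1 hdpos hcop1
  rw [count_divs d 9 1 a hdpos hcop9 haa hra, count_divs d 3 2 b hdpos hcop3 hbb hrb,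
      count_divs d 9 4 c hdpos hcop9 hcc hrc, count_divs d 9 2 e hdpos hcop9 hee hre,
      count_divs d 1 1 a0 hdpos hcop1 ha0 hra0]
  have ha0' : a0 = d - 1 := by
    have h1 : d ≤ 1*a0+1 := Nat.le_of_dvd (by omega) hra0
    omega
  have h9l : (9*l + (d-1-a0))/d = 9*l/d := by rw [ha0']; simp
  rw [h9l]
  exact coreGen d a b c e l hdpos haa hbb hcc hee hra hrb hrc hre
lemma den_not_dvd (p : ℕ) [hp : Fact p.Prime] (q : ℚ) (h : 0 ≤ padicValRat p q) :
    ¬ p ∣ q.den := by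
  intro hdvd
  have hq0 : q ≠ 0 := by
    rintro rfl
    simp only [Rat.den_ofNat] at hdvd
    exact hp.out.one_lt.ne' (Nat.eq_one_of_dvd_one hdvd)
  have hnum : ¬ (p:ℤ) ∣ q.num := by
    intro h'
    have hd' : p ∣ q.num.natAbs := by
      have := Int.natAbs_dvd_natAbs.mpr h'
      simpa using this
    have := Nat.dvd_gcd hd' hdvd
    rw [q.reduced] at this
    exact hp.out.one_lt.ne' (Nat.eq_one_of_dvd_one this)
  have h1 : padicValInt p q.num = 0 := padicValInt.eq_zero_of_not_dvd hnum
  have h2 : 1 ≤ padicValNat p q.den := by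
    exact (padicValNat_dvd_iff_le q.den_nz).mp (by rwa [pow_one])
  rw [padicValRat_def] at h
  omega

/-- for every l ≥ 0 and every prime p ≠ 3, the rational number
(1/9)_{5l}(2/3)_{3l}(4/9)_{2l} / ((1)_{9l}(2/9)_l) is p-integral. -/
theorem stmt_17 :
    ∀ l : ℕ, ∀ p : ℕ, p.Prime → p ≠ 3 →
      ¬ (p ∣ (((ascPochhammer ℚ (5 * l)).eval (1 / 9) *
          (ascPochhammer ℚ (3 * l)).eval (2 / 3) *
          (ascPochhammer ℚ (2 * l)).eval (4 / 9)) /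
        ((ascPochhammer ℚ (9 * l)).eval 1 *
          (ascPochhammer ℚ l).eval (2 / 9))).den) := by
  intro l p hp hp3
  haveI : Fact p.Prime := ⟨hp⟩
  have pos1 : 0 < (ascPochhammer ℚ (5*l)).eval (1/9) := ascPochhammer_pos _ _ (by norm_num)
  have pos2 : 0 < (ascPochhammer ℚ (3*l)).eval (2/3) := ascPochhammer_pos _ _ (by norm_num)
  have pos3 : 0 < (ascPochhammer ℚ (2*l)).eval (4/9) := ascPochhammer_pos _ _ (by norm_num)
  have pos4 : 0 < (ascPochhammer ℚ (9*l)).eval 1 := ascPochhammer_pos _ _ (by norm_num)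
  have pos5 : 0 < (ascPochhammer ℚ l).eval (2/9) := ascPochhammer_pos _ _ (by norm_num)
  apply den_not_dvd
  rw [padicValRat.div (by positivity) (by positivity),
      padicValRat.mul (by positivity) (by positivity),
      padicValRat.mul (by positivity) (by positivity),
      padicValRat.mul (by positivity) (by positivity)]
  have v1 : padicValRat p ((ascPochhammer ℚ (5*l)).eval (1/9)) =
      ∑ j ∈ Finset.range (5*l), (padicValNat p (1 + 9*j) : ℤ) := by
    rw [show (1/9 : ℚ) = ((1:ℕ):ℚ)/((9:ℕ):ℚ) by norm_num]
    exact poch_val p hp3 9 1 (5*l) (by tauto) one_pos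
  have v2 : padicValRat p ((ascPochhammer ℚ (3*l)).eval (2/3)) =
      ∑ j ∈ Finset.range (3*l), (padicValNat p (2 + 3*j) : ℤ) := by
    rw [show (2/3 : ℚ) = ((2:ℕ):ℚ)/((3:ℕ):ℚ) by norm_num]
    exact poch_val p hp3 3 2 (3*l) (by tauto) (by norm_num)
  have v3 : padicValRat p ((ascPochhammer ℚ (2*l)).eval (4/9)) =
      ∑ j ∈ Finset.range (2*l), (padicValNat p (4 + 9*j) : ℤ) := by
    rw [show (4/9 : ℚ) = ((4:ℕ):ℚ)/((9:ℕ):ℚ) by norm_num]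
    exact poch_val p hp3 9 4 (2*l) (by tauto) (by norm_num)
  have v4 : padicValRat p ((ascPochhammer ℚ (9*l)).eval 1) =
      ∑ j ∈ Finset.range (9*l), (padicValNat p (1 + 1*j) : ℤ) := by
    rw [show (1 : ℚ) = ((1:ℕ):ℚ)/((1:ℕ):ℚ) by norm_num]
    exact poch_val p hp3 1 1 (9*l) (by tauto) one_pos
  have v5 : padicValRat p ((ascPochhammer ℚ l).eval (2/9)) =
      ∑ j ∈ Finset.range l, (padicValNat p (2 + 9*j) : ℤ) := by
    rw [show (2/9 : ℚ) = ((2:ℕ):ℚ)/((9:ℕ):ℚ) by norm_num]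
    exact poch_val p hp3 9 2 l (by tauto) (by norm_num)
  rw [v1, v2, v3, v4, v5]
  have hm := master p hp3 l
  have hm' : ((∑ j ∈ Finset.range (9*l), padicValNat p (1 + 1*j))
      + ∑ j ∈ Finset.range l, padicValNat p (2 + 9*j) : ℤ) ≤
      ((∑ j ∈ Finset.range (5*l), padicValNat p (1 + 9*j))
      + (∑ j ∈ Finset.range (3*l), padicValNat p (2 + 3*j))
      + ∑ j ∈ Finset.range (2*l), padicValNat p (4 + 9*j) : ℤ) := by
    exact_mod_cast Int.ofNat_le.mpr hm
  simp only [Nat.cast_sum] at hm'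
  linarith
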